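/- Let (Ω, μ) be a probability space, let Bool carry the ⊤ σ-algebra, let α ∈ [0,1] be real, and let B : ℕ → Ω → Bool be a sequence of random variables that are independent in the sense of Mathlib's ProbabilityTheory.iIndepFun with μ {ω | B k ω = true} = ENNReal.ofReal α for every k. Define the acceptance event A u := {ω | ∃ j ≤ u, B j ω = true}. Then for all natural numbers u ≤ v: μ (A u \ A v) = 0 and μ (A v \ A u) ≤ ENNReal.ofReal (α·(v − u)). -/

import Mathlib

open MeasureTheory ProbabilityTheory

/-- Fairness of the increasing grace period (used in Theorem 2): with
`A u` the event that customer `u` is accepted (some Bernoulli(α) coin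
flip up to `u` is true), an earlier customer is never accepted when a
later one is rejected, and
`μ (A v \ A u) ≤ ENNReal.ofReal (α·(v − u))` for `u ≤ v`. -/
theorem increasing_grace_period_fair {Ω : Type*} [MeasurableSpace Ω]
    (μ : Measure Ω) [IsProbabilityMeasure μ]
    (α : ℝ) (hα0 : 0 ≤ α) (hα1 : α ≤ 1)
    (B : ℕ → Ω → Bool)
    (hindep : iIndepFun (m := fun _ => (⊤ : MeasurableSpace Bool)) B μ)
    (hB : ∀ k, μ {ω | B k ω = true} = ENNReal.ofReal α)
    (A : ℕ → Set Ω) (hA : ∀ u, A u = {ω | ∃ j ≤ u, B j ω = true}) :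
    ∀ u v : ℕ, u ≤ v →
      μ (A u \ A v) = 0 ∧
      μ (A v \ A u) ≤ ENNReal.ofReal (α * ((v : ℝ) - (u : ℝ))) := by
  intro u v huv
  have hsub : A u ⊆ A v := by
    rw [hA, hA]
    rintro ω ⟨j, hj, hjt⟩
    exact ⟨j, hj.trans huv, hjt⟩
  constructor
  · rw [Set.diff_eq_empty.mpr hsub, measure_empty]
  · have hsub2 : A v \ A u ⊆ ⋃ j ∈ Finset.Ioc u v, {ω | B j ω = true} := by
      rintro ω ⟨hv, hu⟩
      rw [hA] at hv hu
      obtain ⟨j, hj, hjt⟩ := hv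
      refine Set.mem_biUnion (Finset.mem_Ioc.mpr ⟨?_, hj⟩) hjt
      by_contra h
      exact hu ⟨j, Nat.le_of_not_lt h, hjt⟩
    calc μ (A v \ A u) ≤ μ (⋃ j ∈ Finset.Ioc u v, {ω | B j ω = true}) :=
          measure_mono hsub2
      _ ≤ ∑ j ∈ Finset.Ioc u v, μ {ω | B j ω = true} :=
          measure_biUnion_finset_le _ _
      _ = (v - u : ℕ) * ENNReal.ofReal α := by
          simp [hB, Nat.card_Ioc, mul_comm]
      _ ≤ ENNReal.ofReal (α * ((v : ℝ) - (u : ℝ))) := by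
          rw [show ((v:ℝ) - (u:ℝ)) = ((v - u : ℕ) : ℝ) by push_cast [huv]; ring,
              mul_comm, ENNReal.ofReal_mul (by positivity)]
          simp
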